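/- Let n ≤ m and let C be an MRD code, i.e., an [n,k]_{q^m/q} code with minimum rank distance d = n - k + 1. Then C is rank-metric intersecting if and only if 2d > n. -/

import Mathlib

open Module Submodule Matrix

variable (Fq : Type*) {L : Type*} [Field Fq] [Field L] [Algebra Fq L]

/-- The rank support of a vector `x ∈ L^n` (L = F_{q^m}, Fq = F_q): the `Fq`-span of the
rows of its coordinate matrix, equivalently the span of all `(f (x 1), …, f (x n))` for
`Fq`-linear functionals `f : L → Fq`. -/
def rsupp {n : ℕ} (x : Fin n → L) : Submodule Fq (Fin n → Fq) :=
  Submodule.span Fq {v | ∃ f : L →ₗ[Fq] Fq, v = fun j => f (x j)}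

/-- The rank (weight) of a vector. -/
noncomputable def rrk {n : ℕ} (x : Fin n → L) : ℕ :=
  Module.finrank Fq (rsupp Fq x)

/-- A linear rank-metric code is intersecting if the supports of any two nonzero
codewords meet nontrivially. -/
def RankIntersecting {n : ℕ} (C : Submodule L (Fin n → L)) : Prop :=
  ∀ c ∈ C, ∀ c' ∈ C, c ≠ 0 → c' ≠ 0 → rsupp Fq c ⊓ rsupp Fq c' ≠ ⊥

/-- A rank-metric code is nondegenerate if the supports of its codewords span `Fq^n`. -/
def Nondeg {n : ℕ} (C : Submodule L (Fin n → L)) : Prop :=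
  (⨆ c ∈ C, rsupp Fq c) = ⊤

/-- An `L`-hyperplane of `L^k`. -/
def IsHyperplane {k : ℕ} (H : Submodule L (Fin k → L)) : Prop :=
  ∃ φ : (Fin k → L) →ₗ[L] L, φ ≠ 0 ∧ H = LinearMap.ker φ

/-- A `q`-system `U` is 2-spannable if it is spanned by its intersections with two
`L`-hyperplanes. -/
def TwoSpannable {k : ℕ} (U : Submodule Fq (Fin k → L)) : Prop :=
  ∃ H₁ H₂ : Submodule L (Fin k → L), IsHyperplane H₁ ∧ IsHyperplane H₂ ∧
    U = (U ⊓ H₁.restrictScalars Fq) ⊔ (U ⊓ H₂.restrictScalars Fq)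

/-- A minimal rank-metric code. -/
def MinimalCode {n : ℕ} (C : Submodule L (Fin n → L)) : Prop :=
  ∀ c ∈ C, ∀ c' ∈ C, rsupp Fq c ≤ rsupp Fq c' → ∃ lam : L, c' = lam • c

/-- Dimension bound for intersections of submodules. -/
lemma aux_inf_finrank {K V : Type*} [Field K] [AddCommGroup V] [Module K V]
    [FiniteDimensional K V] (A B : Submodule K V) :
    finrank K A + finrank K B ≤ finrank K ↥(A ⊓ B) + finrank K V := by
  have h := Submodule.finrank_sup_add_finrank_inf_eq A B
  have h2 : finrank K ↥(A ⊔ B) ≤ finrank K V := Submodule.finrank_le _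
  omega

/-- Key computation: applying an `Fq`-linear functional commutes with the lifted matrix. -/
lemma aux_keycomp {n : ℕ} (M : Matrix (Fin n) (Fin n) Fq) (c : Fin n → L) (f : L →ₗ[Fq] Fq) :
    (M *ᵥ (fun j => f (c j))) = fun i => f (((M.map (algebraMap Fq L)) *ᵥ c) i) := by
  funext i
  simp only [Matrix.mulVec, dotProduct, Matrix.map_apply]
  rw [map_sum]
  refine Finset.sum_congr rfl fun j _ => ?_
  rw [← Algebra.smul_def, LinearMap.map_smul, smul_eq_mul]

/-- for `n ≤ m`, an MRD code is rank-metric intersecting iff `2d > n`. -/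
theorem stmt4 [FiniteDimensional Fq L] {n k d : ℕ} (hn : n ≤ finrank Fq L)
    (C : Submodule L (Fin n → L)) (hk : finrank L C = k)
    (hmin : ∀ c ∈ C, c ≠ 0 → d ≤ rrk Fq c) (hex : ∃ c ∈ C, c ≠ 0 ∧ rrk Fq c = d)
    (hMRD : d = n - k + 1) : RankIntersecting Fq C ↔ 2 * d > n := by
  constructor
  · intro hint
    by_contra hle
    push_neg at hle
    obtain ⟨c₀, hc₀C, hc₀ne, hc₀d⟩ := hex
    have hkn : k ≤ n := by
      have h1 : finrank L C ≤ finrank L (Fin n → L) := Submodule.finrank_le C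
      rwa [hk, Module.finrank_pi, Fintype.card_fin] at h1
    have hk1 : 1 ≤ k := by
      by_contra h
      have hk0 : finrank L C = 0 := by omega
      have hC : C = ⊥ := Submodule.finrank_eq_zero.mp hk0
      rw [hC] at hc₀C
      exact hc₀ne ((Submodule.mem_bot L).mp hc₀C)
    have hdk : d < k := by omega
    set S := rsupp Fq c₀ with hSdef
    have hSd : finrank Fq S = d := hc₀d
    obtain ⟨A, hcompl⟩ := Submodule.exists_isCompl S
    set p : (Fin n → Fq) →ₗ[Fq] (Fin n → Fq) :=
      S.subtype ∘ₗ (S.linearProjOfIsCompl A hcompl) with hpdef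
    have hker : LinearMap.ker p = A := by
      rw [hpdef, LinearMap.ker_comp, Submodule.ker_subtype]
      exact Submodule.linearProjOfIsCompl_ker hcompl
    have hrangep : LinearMap.range p ≤ S := by
      rw [hpdef]
      refine (LinearMap.range_comp_le_range _ _).trans ?_
      rw [Submodule.range_subtype]
    set M : Matrix (Fin n) (Fin n) Fq := LinearMap.toMatrix' p with hMdef
    have hpM : ∀ v, M *ᵥ v = p v := by
      intro v
      conv_rhs => rw [← Matrix.toLin'_toMatrix' p]
      rw [Matrix.toLin'_apply]
    set M' : Matrix (Fin n) (Fin n) L := M.map (algebraMap Fq L) with hM'def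
    set Φ : (Fin n → L) →ₗ[L] (Fin n → L) := M'.mulVecLin with hΦdef
    -- codewords in the kernel of Φ have support inside A
    have hWsupp : ∀ c : Fin n → L, Φ c = 0 → rsupp Fq c ≤ A := by
      intro c hc
      rw [rsupp, Submodule.span_le]
      rintro v ⟨f, rfl⟩
      rw [SetLike.mem_coe, ← hker, LinearMap.mem_ker, ← hpM, aux_keycomp]
      have h0 : M' *ᵥ c = 0 := hc
      rw [h0]
      funext i
      simp
    -- the range of Φ has dimension at most d
    let b := Module.finBasis Fq S
    set g : Fin (finrank Fq S) → (Fin n → L) :=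
      fun i => fun j => algebraMap Fq L ((b i : Fin n → Fq) j) with hgdef
    set ι : (Fin n → Fq) →ₗ[Fq] (Fin n → L) :=
      LinearMap.pi (fun j => (Algebra.linearMap Fq L).comp (LinearMap.proj j)) with hιdef
    have hι : ∀ v j, ι v j = algebraMap Fq L (v j) := fun v j => rfl
    have hSspan : S = Submodule.span Fq (Set.range (fun i => (b i : Fin n → Fq))) := by
      calc S = Submodule.map S.subtype ⊤ := by
              rw [Submodule.map_top, Submodule.range_subtype]
        _ = Submodule.map S.subtype (Submodule.span Fq (Set.range b)) := by rw [b.span_eq]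
        _ = Submodule.span Fq (S.subtype '' Set.range b) := Submodule.map_span _ _
        _ = Submodule.span Fq (Set.range (fun i => (b i : Fin n → Fq))) := by
              rw [← Set.range_comp]; rfl
    have hScomap : S ≤ Submodule.comap ι
        ((Submodule.span L (Set.range g)).restrictScalars Fq) := by
      refine le_of_eq_of_le hSspan ?_
      rw [Submodule.span_le]
      rintro v ⟨i, rfl⟩
      show ι ((b i : Fin n → Fq)) ∈ (Submodule.span L (Set.range g)).restrictScalars Fq
      have : ι ((b i : Fin n → Fq)) = g i := rfl
      rw [this]
      exact Submodule.subset_span ⟨i, rfl⟩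
    have hrangeΦ : LinearMap.range Φ ≤ Submodule.span L (Set.range g) := by
      rw [hΦdef, Matrix.range_mulVecLin, Submodule.span_le]
      rintro v ⟨j, rfl⟩
      have hcol : Mᵀ j ∈ S := by
        have h1 : Mᵀ j = p (Pi.single j 1) := by rw [← hpM, Matrix.mulVec_single_one]; rfl
        rw [h1]
        exact hrangep (LinearMap.mem_range_self _ _)
      have h2 : M'ᵀ j = ι (Mᵀ j) := by
        funext i
        rfl
      rw [show M'.col j = M'ᵀ j from rfl, h2]
      exact hScomap hcol
    have hrd : finrank L (LinearMap.range Φ) ≤ d := by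
      have h1 : finrank L ↥(Submodule.span L (Set.range g)) ≤ finrank Fq ↥S := by
        simpa [Set.finrank] using finrank_range_le_card (R := L) g
      exact le_trans (Submodule.finrank_mono hrangeΦ) (h1.trans hSd.le)
    have hrn : finrank L (LinearMap.range Φ) + finrank L (LinearMap.ker Φ) = n := by
      have := LinearMap.finrank_range_add_finrank_ker Φ
      rwa [Module.finrank_pi, Fintype.card_fin] at this
    -- the intersection of C with ker Φ is nonzero
    have haux := aux_inf_finrank C (LinearMap.ker Φ)
    rw [hk, Module.finrank_pi, Fintype.card_fin] at haux
    have hinfpos : 0 < finrank L ↥(C ⊓ LinearMap.ker Φ) := by omega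
    have hinfne : C ⊓ LinearMap.ker Φ ≠ ⊥ := by
      intro hbot
      rw [hbot, finrank_bot] at hinfpos
      exact lt_irrefl 0 hinfpos
    obtain ⟨c', hc'mem, hc'ne⟩ := Submodule.exists_mem_ne_zero_of_ne_bot hinfne
    obtain ⟨hc'C, hc'W⟩ := Submodule.mem_inf.mp hc'mem
    have hsupp' : rsupp Fq c' ≤ A := hWsupp c' hc'W
    have hbot : rsupp Fq c₀ ⊓ rsupp Fq c' = ⊥ := by
      refine le_bot_iff.mp ?_
      refine le_trans (inf_le_inf_left _ hsupp') ?_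
      rw [← hSdef]
      exact le_of_eq hcompl.inf_eq_bot
    exact hint c₀ hc₀C c' hc'C hc₀ne hc'ne hbot
  · intro h2d c hc c' hc' hcne hc'ne hbot
    have h1 : d ≤ finrank Fq (rsupp Fq c) := hmin c hc hcne
    have h2 : d ≤ finrank Fq (rsupp Fq c') := hmin c' hc' hc'ne
    have haux := aux_inf_finrank (rsupp Fq c) (rsupp Fq c')
    rw [hbot, finrank_bot, Module.finrank_pi, Fintype.card_fin] at haux
    omega
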